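/- Let z_1, …, z_n be pairwise distinct complex numbers. Then (z_1, …, z_n) satisfies the normalized system if and only if it satisfies the transformed polynomial system. -/

import Mathlib

open Finset


lemma pair_symm' {M : Type*} [AddCommMonoid M] {n : ℕ} (f : Fin n → Fin n → M) :
    ∑ i, ∑ j, (if i ≠ j then f i j else 0)
      = ∑ i, ∑ j, (if i < j then f i j + f j i else 0) := by
  have h1 : ∀ i j : Fin n, (if i ≠ j then f i j else 0)
      = (if i < j then f i j else 0) + (if j < i then f i j else 0) := by
    intro i j
    rcases lt_trichotomy i j with h | h | h
    · simp [h, h.ne, h.asymm]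
    · simp [h]
    · simp [h, h.ne', h.asymm]
  simp_rw [h1, Finset.sum_add_distrib]
  have h2 : ∑ i, ∑ j, (if (j : Fin n) < i then f i j else 0)
      = ∑ i, ∑ j, (if i < j then f j i else 0) := Finset.sum_comm
  rw [h2, ← Finset.sum_add_distrib]
  simp_rw [← Finset.sum_add_distrib, ite_add_ite, add_zero]

lemma key_identity {n : ℕ} (Γ : Fin n → ℝ) (z : Fin n → ℂ)
    (hz : ∀ i j : Fin n, i ≠ j → z i ≠ z j) (k : ℕ) :
    ∑ j, (Γ j : ℂ) * z j ^ k * ∑ l ∈ Finset.univ.erase j, (Γ l : ℂ) / (z j - z l)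
      = if k = 0 then 0
        else ∑ i, ∑ j, if i < j then
            (Γ i : ℂ) * (Γ j : ℂ) *
              ∑ p ∈ Finset.HasAntidiagonal.antidiagonal (k - 1), z i ^ p.1 * z j ^ p.2
          else 0 := by
  have step1 : ∀ j : Fin n,
      (Γ j : ℂ) * z j ^ k * ∑ l ∈ Finset.univ.erase j, (Γ l : ℂ) / (z j - z l)
        = ∑ l, (if j ≠ l then (Γ j : ℂ) * (Γ l : ℂ) * z j ^ k / (z j - z l) else 0) := by
    intro j
    rw [Finset.mul_sum, ← Finset.filter_ne' Finset.univ j, Finset.sum_filter]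
    refine Finset.sum_congr rfl fun l _ => ?_
    rcases eq_or_ne j l with h | h
    · simp [h]
    · rw [if_pos h.symm, if_pos h]
      ring
  simp_rw [step1]
  rw [pair_symm' (fun i j => (Γ i : ℂ) * (Γ j : ℂ) * z i ^ k / (z i - z j))]
  rcases Nat.eq_zero_or_pos k with hk | hk
  · subst hk
    simp only [pow_zero, if_true]
    refine (Finset.sum_eq_zero fun i _ => Finset.sum_eq_zero fun j _ => ?_).trans rfl
    rcases lt_or_ge i j with h | h
    · have hij : z i - z j ≠ 0 := sub_ne_zero.mpr (hz i j h.ne)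
      have hji : z j - z i ≠ 0 := sub_ne_zero.mpr (hz j i h.ne')
      simp only [h, if_true]
      field_simp
      ring
    · simp [not_lt.mpr h]
  · rw [if_neg hk.ne']
    refine Finset.sum_congr rfl fun i _ => Finset.sum_congr rfl fun j _ => ?_
    rcases lt_or_ge i j with h | h
    · have hij : z i - z j ≠ 0 := sub_ne_zero.mpr (hz i j h.ne)
      have hji : z j - z i ≠ 0 := sub_ne_zero.mpr (hz j i h.ne')
      simp only [h, if_true]
      have hgeom : (∑ p ∈ Finset.HasAntidiagonal.antidiagonal (k - 1), z i ^ p.1 * z j ^ p.2) * (z i - z j)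
          = z i ^ k - z j ^ k := by
        have hk1 : (k - 1).succ = k := by omega
        rw [Finset.Nat.sum_antidiagonal_eq_sum_range_succ_mk, hk1]
        simpa using geom_sum₂_mul (z i) (z j) k
      have : (Γ i : ℂ) * (Γ j : ℂ) *
          ∑ p ∈ Finset.HasAntidiagonal.antidiagonal (k - 1), z i ^ p.1 * z j ^ p.2
          = (Γ i : ℂ) * (Γ j : ℂ) * ((z i ^ k - z j ^ k) / (z i - z j)) := by
        congr 1
        rw [eq_div_iff hij, hgeom]
      rw [this]
      field_simp
      ring
    · simp [not_lt.mpr h]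


/-- For pairwise distinct `z_1, …, z_n`, the normalized system
`z_j^m + W(z_j) = Σ_{k≠j} Γ_k/(z_j − z_k)` holds iff the transformed polynomial
system holds.  The equation index `k` below is 0-based, corresponding to the
paper's equation `k+1`. -/
theorem normalized_iff_transformed
    (n : ℕ) (hn : 2 ≤ n) (m : ℕ) (hm : 1 ≤ m)
    (Γ : Fin n → ℝ) (hΓ : ∀ j, Γ j ≠ 0)
    (W : Polynomial ℂ) (hW : W.natDegree ≤ m - 1)
    (z : Fin n → ℂ) (hz : ∀ i j, i ≠ j → z i ≠ z j) :
    (∀ j, z j ^ m + W.eval (z j)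
        = ∑ k ∈ Finset.univ.erase j, (Γ k : ℂ) / (z j - z k))
    ↔ (∀ k ∈ Finset.range n,
        (∑ j, (Γ j : ℂ) * z j ^ (m + k))
          + ∑ j, (Γ j : ℂ) * z j ^ k * W.eval (z j)
        = if k = 0 then 0
          else ∑ i, ∑ j, if i < j then
              (Γ i : ℂ) * (Γ j : ℂ) *
                ∑ p ∈ Finset.HasAntidiagonal.antidiagonal (k - 1), z i ^ p.1 * z j ^ p.2
            else 0) := by
  set E : Fin n → ℂ := fun j =>
    z j ^ m + W.eval (z j) - ∑ k ∈ Finset.univ.erase j, (Γ k : ℂ) / (z j - z k) with hE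
  have hkey : ∀ k : ℕ,
      ∑ j, (Γ j : ℂ) * z j ^ k * E j
        = ((∑ j, (Γ j : ℂ) * z j ^ (m + k))
            + ∑ j, (Γ j : ℂ) * z j ^ k * W.eval (z j))
          - (if k = 0 then 0
            else ∑ i, ∑ j, if i < j then
                (Γ i : ℂ) * (Γ j : ℂ) *
                  ∑ p ∈ Finset.HasAntidiagonal.antidiagonal (k - 1), z i ^ p.1 * z j ^ p.2
              else 0) := by
    intro k
    rw [← key_identity Γ z hz k, ← Finset.sum_add_distrib, ← Finset.sum_sub_distrib]
    refine Finset.sum_congr rfl fun j _ => ?_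
    simp only [hE]
    rw [pow_add]
    ring
  constructor
  · intro h k _
    have hzero : ∀ j, E j = 0 := fun j => sub_eq_zero.mpr (h j)
    have := hkey k
    simp only [hzero, mul_zero, Finset.sum_const_zero] at this
    exact sub_eq_zero.mp this.symm
  · intro h j
    have hinj : Function.Injective z := by
      intro a b hab
      by_contra hne
      exact hz a b hne hab
    have hv : (fun j => (Γ j : ℂ) * E j) = 0 := by
      apply Matrix.eq_zero_of_forall_pow_sum_mul_pow_eq_zero hinj
      intro i
      have h0 := h (i : ℕ) (Finset.mem_range.mpr i.isLt)
      have := hkey (i : ℕ)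
      rw [h0, sub_self] at this
      rw [← this]
      refine Finset.sum_congr rfl fun l _ => ?_
      ring
    have hEj : E j = 0 := by
      have := congrFun hv j
      simp only [Pi.zero_apply] at this
      rcases mul_eq_zero.mp this with h' | h'
      · exact absurd h' (Complex.ofReal_ne_zero.mpr (hΓ j))
      · exact h'
    exact sub_eq_zero.mp hEj
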